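/- Let d > 0 and 0 < ℓ < 1, and set K = (√((2 - ℓ)² + ℓ²d²) + ℓ√(1 + d²))² / (4(1 - ℓ)). For every (x, y) with 0 ≤ y ≤ 1 and 0 ≤ x ≤ d(1 - ℓy), the derivative matrix A = [[1/(1 - ℓy), ℓx/(1 - ℓy)²], [0, 1]] of the map φ(x, y) = (x/(1 - ℓy), y) satisfies ‖A‖² ≤ K · det A, where ‖A‖ is the operator norm of A acting on Euclidean ℝ². -/

import Mathlib

private lemma sqrt_key (s t c : ℝ) (hs : 0 < s) (hst : s ≤ t) (ht : t ≤ 1) (hc : 0 ≤ c) :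
    s * (1 + t^2 + c + Real.sqrt ((1+t^2+c)^2 - 4*t^2)) ≤
      t * (1 + s^2 + c + Real.sqrt ((1+s^2+c)^2 - 4*s^2)) := by
  have ht0 : 0 < t := lt_of_lt_of_le hs hst
  have hs1 : s ≤ 1 := hst.trans ht
  have hWt0 : 0 ≤ (1+t^2+c)^2 - 4*t^2 := by nlinarith [sq_nonneg (1-t), sq_nonneg (1+t)]
  have hWs0 : 0 ≤ (1+s^2+c)^2 - 4*s^2 := by nlinarith [sq_nonneg (1-s), sq_nonneg (1+s)]
  have hWtn := Real.sqrt_nonneg ((1+t^2+c)^2 - 4*t^2)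
  have hWsn := Real.sqrt_nonneg ((1+s^2+c)^2 - 4*s^2)
  set Wt := Real.sqrt ((1+t^2+c)^2 - 4*t^2) with hWtdef
  set Ws := Real.sqrt ((1+s^2+c)^2 - 4*s^2) with hWsdef
  have hWt2 : Wt^2 = (1+t^2+c)^2 - 4*t^2 := Real.sq_sqrt hWt0
  have hWs2 : Ws^2 = (1+s^2+c)^2 - 4*s^2 := Real.sq_sqrt hWs0
  have hkey : 0 ≤ (t^2 - s^2) * ((1+c)^2 - s^2*t^2) := by
    apply mul_nonneg
    · nlinarith
    · have hst1 : s*t ≤ 1 := mul_le_one₀ hs1 ht0.le ht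
      nlinarith [hst1, mul_nonneg hs.le ht0.le]
  have h2 : (s*Wt)^2 ≤ (t*Ws)^2 := by
    rw [mul_pow, mul_pow, hWt2, hWs2]; nlinarith [hkey]
  have h1 : s * Wt ≤ t * Ws := by
    nlinarith [mul_nonneg hs.le hWtn, mul_nonneg ht0.le hWsn, h2]
  nlinarith [h1, mul_nonneg (sub_nonneg.2 hst) (by nlinarith : (0:ℝ) ≤ 1 + c - s*t)]

private lemma norm_ineq (a b M : ℝ) (hMa : a ^ 2 < M)
    (hdisc : 0 ≤ M ^ 2 - M * (a ^ 2 + b ^ 2 + 1) + a ^ 2) :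
    ‖LinearMap.toContinuousLinearMap
        (Matrix.toEuclideanLin (!![a, b; 0, 1] : Matrix (Fin 2) (Fin 2) ℝ))‖ ^ 2 ≤ M := by
  have hM0 : 0 < M := lt_of_le_of_lt (sq_nonneg a) hMa
  set T := LinearMap.toContinuousLinearMap
      (Matrix.toEuclideanLin (!![a, b; 0, 1] : Matrix (Fin 2) (Fin 2) ℝ)) with hT
  have hb : ‖T‖ ≤ Real.sqrt M := by
    apply ContinuousLinearMap.opNorm_le_bound _ (Real.sqrt_nonneg M)
    intro v
    have hv : ‖v‖ ^ 2 = v 0 ^ 2 + v 1 ^ 2 := by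
      rw [EuclideanSpace.norm_eq, Real.sq_sqrt (by positivity)]
      simp [Fin.sum_univ_two, sq_abs]
    have hT0 : (T v) 0 = a * v 0 + b * v 1 := by
      simp [hT, Matrix.toEuclideanLin_apply, Matrix.mulVec, dotProduct,
        Fin.sum_univ_two]
    have hT1 : (T v) 1 = v 1 := by
      simp [hT, Matrix.toEuclideanLin_apply, Matrix.mulVec, dotProduct,
        Fin.sum_univ_two]
    have hTn : ‖T v‖ ^ 2 = (a * v 0 + b * v 1) ^ 2 + v 1 ^ 2 := by
      rw [EuclideanSpace.norm_eq, Real.sq_sqrt (by positivity)]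
      simp [Fin.sum_univ_two, sq_abs, hT0, hT1]
    calc ‖T v‖ = Real.sqrt (‖T v‖ ^ 2) := (Real.sqrt_sq (norm_nonneg _)).symm
      _ ≤ Real.sqrt (M * ‖v‖ ^ 2) := by
          apply Real.sqrt_le_sqrt
          rw [hTn, hv]
          nlinarith [sq_nonneg ((M - a ^ 2) * v 0 - a * b * v 1),
            mul_nonneg hdisc (sq_nonneg (v 1)), hMa, sq_nonneg (v 0), sq_nonneg (v 1)]
      _ = Real.sqrt M * ‖v‖ := by
          rw [Real.sqrt_mul hM0.le, Real.sqrt_sq (norm_nonneg _)]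
  calc ‖T‖ ^ 2 ≤ Real.sqrt M ^ 2 := by
        apply pow_le_pow_left₀ (norm_nonneg _) hb
    _ = M := Real.sq_sqrt hM0.le

set_option maxHeartbeats 2000000 in
/-- On the trapezoid `G₁`, the derivative matrix
`A = [[1/(1 - ℓy), ℓx/(1 - ℓy)²], [0, 1]]` of `φ(x, y) = (x/(1 - ℓy), y)`
satisfies `‖A‖² ≤ K · det A`, where `‖A‖` is the operator norm of `A` on
Euclidean `ℝ²` and `K = (√((2 - ℓ)² + ℓ²d²) + ℓ√(1 + d²))²/(4(1 - ℓ))`. -/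
theorem stmt_13 (d ℓ x y : ℝ) (hd : 0 < d) (hℓ0 : 0 < ℓ) (hℓ1 : ℓ < 1)
    (hy0 : 0 ≤ y) (hy1 : y ≤ 1) (hx0 : 0 ≤ x) (hx : x ≤ d * (1 - ℓ * y)) :
    ‖LinearMap.toContinuousLinearMap
        (Matrix.toEuclideanLin
          (!![1 / (1 - ℓ * y), ℓ * x / (1 - ℓ * y) ^ 2; 0, 1] :
            Matrix (Fin 2) (Fin 2) ℝ))‖ ^ 2 ≤
      ((Real.sqrt ((2 - ℓ) ^ 2 + ℓ ^ 2 * d ^ 2) + ℓ * Real.sqrt (1 + d ^ 2)) ^ 2 /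
          (4 * (1 - ℓ))) *
        (!![1 / (1 - ℓ * y), ℓ * x / (1 - ℓ * y) ^ 2; 0, 1] :
          Matrix (Fin 2) (Fin 2) ℝ).det := by
  have hs0 : (0:ℝ) < 1 - ℓ := by linarith
  have ht0 : (0:ℝ) < 1 - ℓ * y := by nlinarith
  set t := 1 - ℓ * y with htdef
  set s := 1 - ℓ with hsdef
  have hst : s ≤ t := by
    have h1 : ℓ * y ≤ ℓ := by nlinarith
    simp only [htdef, hsdef]; linarith
  have ht1 : t ≤ 1 := by
    have h1 : 0 ≤ ℓ * y := by positivity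
    simp only [htdef]; linarith
  have ht2 : (0:ℝ) < t ^ 2 := by positivity
  set c := ℓ ^ 2 * d ^ 2 with hcdef
  have hc0 : 0 < c := by positivity
  -- rewrite the square roots defining K
  have hK1 : Real.sqrt ((2 - ℓ) ^ 2 + c) = Real.sqrt ((1 + s) ^ 2 + c) := by
    congr 1; rw [hsdef]; ring
  have hK2 : ℓ * Real.sqrt (1 + d ^ 2) = Real.sqrt ((1 - s) ^ 2 + c) := by
    rw [show (1 - s) ^ 2 + c = ℓ ^ 2 * (1 + d ^ 2) by rw [hsdef, hcdef]; ring,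
      Real.sqrt_mul (by positivity), Real.sqrt_sq hℓ0.le]
  rw [hK1, hK2]
  have hdet : (!![1 / t, ℓ * x / t ^ 2; 0, 1] : Matrix (Fin 2) (Fin 2) ℝ).det = 1 / t := by
    simp [Matrix.det_fin_two_of]
  rw [hdet]
  have hA0 : (0:ℝ) ≤ (1 + s) ^ 2 + c := by positivity
  have hB0 : (0:ℝ) ≤ (1 - s) ^ 2 + c := by positivity
  have hWs0 : (0:ℝ) ≤ (1 + s ^ 2 + c) ^ 2 - 4 * s ^ 2 := by
    have e : (1 + s ^ 2 + c) ^ 2 - 4 * s ^ 2 = ((1 - s) ^ 2 + c) * ((1 + s) ^ 2 + c) := by ring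
    rw [e]; positivity
  set Ws := Real.sqrt ((1 + s ^ 2 + c) ^ 2 - 4 * s ^ 2) with hWsdef
  have hWsn : 0 ≤ Ws := Real.sqrt_nonneg _
  set K := (Real.sqrt ((1 + s) ^ 2 + c) + Real.sqrt ((1 - s) ^ 2 + c)) ^ 2 / (4 * s) with hKdef
  have hexp : (Real.sqrt ((1 + s) ^ 2 + c) + Real.sqrt ((1 - s) ^ 2 + c)) ^ 2
      = (1 + s ^ 2 + c) * 2 + 2 * Ws := by
    have hprod : Real.sqrt ((1 + s) ^ 2 + c) * Real.sqrt ((1 - s) ^ 2 + c) = Ws := by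
      rw [← Real.sqrt_mul hA0, hWsdef]; congr 1; ring
    rw [add_sq, Real.sq_sqrt hA0, Real.sq_sqrt hB0, mul_assoc, hprod]; ring
  have hKs : 2 * s * K = 1 + s ^ 2 + c + Ws := by
    rw [hKdef, hexp]; field_simp; ring
  -- key bound
  have hWt0 : (0:ℝ) ≤ (1 + t ^ 2 + c) ^ 2 - 4 * t ^ 2 := by
    have e : (1 + t ^ 2 + c) ^ 2 - 4 * t ^ 2 = ((1 - t) ^ 2 + c) * ((1 + t) ^ 2 + c) := by ring
    rw [e]; positivity
  set Wt := Real.sqrt ((1 + t ^ 2 + c) ^ 2 - 4 * t ^ 2) with hWtdef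
  have hWtn : 0 ≤ Wt := Real.sqrt_nonneg _
  have hkey : 1 + t ^ 2 + c + Wt ≤ 2 * t * K := by
    have h := sqrt_key s t c hs0 hst ht1 hc0.le
    rw [← hWsdef, ← hWtdef] at h
    have h' : s * (1 + t ^ 2 + c + Wt) ≤ s * (2 * t * K) := by
      have e : t * (1 + s ^ 2 + c + Ws) = s * (2 * t * K) := by
        rw [← hKs]; ring
      linarith [h, e.le, e.ge]
    exact le_of_mul_le_mul_left h' hs0
  -- lower bound for Wt
  have hWtlb : 1 - t ^ 2 ≤ Wt := by
    rw [hWtdef]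
    have h1t2 : 0 ≤ 1 - t ^ 2 := by nlinarith [ht0, ht1]
    have h9 : (1 - t ^ 2) ^ 2 ≤ (1 + t ^ 2 + c) ^ 2 - 4 * t ^ 2 := by
      have e : (1 + t ^ 2 + c) ^ 2 - 4 * t ^ 2 - (1 - t ^ 2) ^ 2
          = 2 * c * t ^ 2 + 2 * c + c ^ 2 := by ring
      have h10 : 0 ≤ 2 * c * t ^ 2 + 2 * c + c ^ 2 := by positivity
      linarith
    calc 1 - t ^ 2 = Real.sqrt ((1 - t ^ 2) ^ 2) := (Real.sqrt_sq h1t2).symm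
      _ ≤ Real.sqrt ((1 + t ^ 2 + c) ^ 2 - 4 * t ^ 2) := Real.sqrt_le_sqrt h9
  -- M strictly dominates a²
  have hMa : (1 / t) ^ 2 < K * (1 / t) := by
    have h2 : 2 < 2 * t * K := by linarith [hkey, hWtlb, hc0]
    have hKt : 1 < t * K := by linarith
    have e1 : (1 / t) ^ 2 = 1 / t ^ 2 := by rw [div_pow, one_pow]
    have e2 : K * (1 / t) = t * K / t ^ 2 := by field_simp
    rw [e1, e2]
    exact (div_lt_div_iff_of_pos_right ht2).2 hKt
  -- entry bounds
  have hxx : ℓ ^ 2 * x ^ 2 ≤ c * t ^ 2 := by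
    have h := mul_le_mul_of_nonneg_left (pow_le_pow_left₀ hx0 hx 2) (sq_nonneg ℓ)
    calc ℓ ^ 2 * x ^ 2 ≤ ℓ ^ 2 * (d * t) ^ 2 := h
      _ = c * t ^ 2 := by rw [hcdef]; ring
  have hb2' : (ℓ * x / t ^ 2) ^ 2 * t ^ 2 ≤ c := by
    have e3 : (ℓ * x / t ^ 2) ^ 2 * t ^ 2 = ℓ ^ 2 * x ^ 2 / t ^ 2 := by
      field_simp
    rw [e3, div_le_iff₀ ht2]
    linarith [hxx]
  set F := (1 / t) ^ 2 + (ℓ * x / t ^ 2) ^ 2 + 1 with hFdef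
  have hF0 : 0 ≤ F := by positivity
  have h1t : (1 / t) ^ 2 * t ^ 2 = 1 := by field_simp
  have hFle : F ≤ (1 + t ^ 2 + c) / t ^ 2 := by
    rw [le_div_iff₀ ht2, hFdef]
    have e8 : ((1 / t) ^ 2 + (ℓ * x / t ^ 2) ^ 2 + 1) * t ^ 2
        = (1 / t) ^ 2 * t ^ 2 + (ℓ * x / t ^ 2) ^ 2 * t ^ 2 + t ^ 2 := by ring
    rw [e8, h1t]; linarith [hb2']
  have hFA0 : 0 ≤ F ^ 2 - 4 * (1 / t) ^ 2 := by
    rw [hFdef]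
    have e9 : ((1 / t) ^ 2 + (ℓ * x / t ^ 2) ^ 2 + 1) ^ 2 - 4 * (1 / t) ^ 2
        = ((1 / t) ^ 2 - 1) ^ 2 + 2 * (ℓ * x / t ^ 2) ^ 2 * ((1 / t) ^ 2 + 1)
          + (ℓ * x / t ^ 2) ^ 4 := by ring
    rw [e9]; positivity
  set WA := Real.sqrt (F ^ 2 - 4 * (1 / t) ^ 2) with hWAdef
  have hWA2 : WA ^ 2 = F ^ 2 - 4 * (1 / t) ^ 2 := Real.sq_sqrt hFA0
  have hWAn : 0 ≤ WA := Real.sqrt_nonneg _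
  have hWAle : WA ≤ Wt / t ^ 2 := by
    have e4 : ((1 + t ^ 2 + c) / t ^ 2) ^ 2 - 4 * (1 / t) ^ 2
        = ((1 + t ^ 2 + c) ^ 2 - 4 * t ^ 2) / (t ^ 2) ^ 2 := by
      field_simp
    have hF2 : F ^ 2 ≤ ((1 + t ^ 2 + c) / t ^ 2) ^ 2 := pow_le_pow_left₀ hF0 hFle 2
    have e5 : Wt / t ^ 2 = Real.sqrt (((1 + t ^ 2 + c) ^ 2 - 4 * t ^ 2) / (t ^ 2) ^ 2) := by
      rw [Real.sqrt_div hWt0, Real.sqrt_sq ht2.le, hWtdef]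
    rw [hWAdef, e5]
    apply Real.sqrt_le_sqrt
    rw [← e4]; linarith [hF2]
  -- discriminant condition
  have h2M : F + WA ≤ 2 * (K * (1 / t)) := by
    have h5 : (1 + t ^ 2 + c + Wt) / t ^ 2 ≤ 2 * t * K / t ^ 2 :=
      (div_le_div_iff_of_pos_right ht2).2 hkey
    have e6 : 2 * t * K / t ^ 2 = 2 * (K * (1 / t)) := by field_simp
    have e7 : (1 + t ^ 2 + c) / t ^ 2 + Wt / t ^ 2 = (1 + t ^ 2 + c + Wt) / t ^ 2 := by ring
    calc F + WA ≤ (1 + t ^ 2 + c) / t ^ 2 + Wt / t ^ 2 := by linarith [hFle, hWAle]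
      _ = (1 + t ^ 2 + c + Wt) / t ^ 2 := e7
      _ ≤ 2 * t * K / t ^ 2 := h5
      _ = 2 * (K * (1 / t)) := e6
  have hdisc : 0 ≤ (K * (1 / t)) ^ 2
      - (K * (1 / t)) * ((1 / t) ^ 2 + (ℓ * x / t ^ 2) ^ 2 + 1) + (1 / t) ^ 2 := by
    have h7 : WA ≤ 2 * (K * (1 / t)) - F := by linarith
    have h8 : WA ^ 2 ≤ (2 * (K * (1 / t)) - F) ^ 2 := pow_le_pow_left₀ hWAn h7 2
    rw [hWA2] at h8
    rw [← hFdef]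
    have e10 : (2 * (K * (1 / t)) - F) ^ 2
        = 4 * (K * (1 / t)) ^ 2 - 4 * (K * (1 / t)) * F + F ^ 2 := by ring
    rw [e10] at h8
    linarith [h8]
  exact norm_ineq (1 / t) (ℓ * x / t ^ 2) (K * (1 / t)) hMa hdisc
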